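/- The number of walks of length n between two vertices at distance k in the (q+1)-regular tree (q ≥ 1) equals S_q(n,k) = Σ_{t ∈ {k,k+2,...,n}} q^{(n-t)/2} (C(n,(n-t)/2) - C(n,(n-t)/2-1)) when n ≥ k and n - k is even, and equals 0 when n - k is odd or n < k. -/

import Mathlib

/-- Binomial coefficient `C(n,k)` with integer lower index, zero when `k < 0`. -/
def Cz (n : ℕ) (k : ℤ) : ℤ := if 0 ≤ k then (n.choose k.toNat : ℤ) else 0

/-- Ballot-type number `L(n,t) = C(n,(n-t)/2) - C(n,(n-t)/2 - 1)`. -/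
def Lnum (n t : ℕ) : ℤ :=
  Cz n (((n - t) / 2 : ℕ) : ℤ) - Cz n ((((n - t) / 2 : ℕ) : ℤ) - 1)

/-- `S_q(n,k) = Σ_{t ∈ {k,k+2,...,n}} q^{(n-t)/2} L(n,t)`, and `0` if `k > n`. -/
def Snum (q n k : ℕ) : ℤ :=
  if k ≤ n then
    ∑ j ∈ Finset.range ((n - k) / 2 + 1), (q : ℤ) ^ ((n - k) / 2 - j) * Lnum n (k + 2 * j)
  else 0

lemma Cz_coe (n m : ℕ) : Cz n (m : ℤ) = (n.choose m : ℤ) := by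
  simp [Cz]

lemma Cz_neg (n : ℕ) (k : ℤ) (h : k < 0) : Cz n k = 0 := by
  simp [Cz, not_le.mpr h]

lemma Cz_zero (n : ℕ) : Cz n 0 = 1 := by simp [Cz]

lemma Cz_pascal (n : ℕ) (k : ℤ) : Cz (n+1) k = Cz n k + Cz n (k-1) := by
  rcases lt_or_ge k 0 with h | h
  · rw [Cz_neg _ _ h, Cz_neg _ _ h, Cz_neg _ _ (by omega)]; ring
  · obtain ⟨m, rfl⟩ : ∃ m : ℕ, k = (m : ℤ) := ⟨k.toNat, (Int.toNat_of_nonneg h).symm⟩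
    cases m with
    | zero =>
      simp only [Nat.cast_zero, Cz_zero]
      rw [Cz_neg n (0 - 1 : ℤ) (by norm_num)]; ring
    | succ m =>
      have e : ((m + 1 : ℕ) : ℤ) - 1 = (m : ℤ) := by push_cast; ring
      rw [e, Cz_coe, Cz_coe, Cz_coe, Nat.choose_succ_succ]
      push_cast; ring

lemma Lnum_self (n : ℕ) : Lnum n n = 1 := by
  rw [Lnum, Nat.sub_self]
  norm_num [Cz_zero, Cz_neg n (-1 : ℤ) (by norm_num)]

lemma Lnum_pascal (n t m : ℕ) (ht : 1 ≤ t) (hm : 1 ≤ m) (h : n + 1 = t + 2*m) :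
    Lnum (n+1) t = Lnum n (t-1) + Lnum n (t+1) := by
  have h1 : (n + 1 - t) / 2 = m := by omega
  have h2 : (n - (t-1)) / 2 = m := by omega
  have h3 : (n - (t+1)) / 2 = m - 1 := by omega
  rw [Lnum, Lnum, Lnum, h1, h2, h3]
  have e1 : ((m - 1 : ℕ) : ℤ) = (m : ℤ) - 1 := by omega
  rw [e1, Cz_pascal, Cz_pascal]
  ring

lemma Lnum_zero_eq (n M : ℕ) (hM : 1 ≤ M) (h : n + 1 = 2*M) :
    Lnum (n+1) 0 = Lnum n 1 := by
  have h1 : (n + 1 - 0) / 2 = M := by omega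
  have h2 : (n - 1) / 2 = M - 1 := by omega
  rw [Lnum, Lnum, h1, h2]
  have e1 : ((M - 1 : ℕ) : ℤ) = (M : ℤ) - 1 := by omega
  rw [e1, Cz_pascal, Cz_pascal]
  have hsym : Cz n (M : ℤ) = Cz n ((M:ℤ) - 1) := by
    obtain ⟨M', rfl⟩ : ∃ M', M = M' + 1 := ⟨M - 1, by omega⟩
    have hn : n = 2 * M' + 1 := by omega
    have e2 : ((M' + 1 : ℕ) : ℤ) - 1 = ((M' : ℕ) : ℤ) := by push_cast; ring
    rw [e2, Cz_coe, Cz_coe, hn]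
    exact_mod_cast congrArg (Nat.cast (R := ℤ)) (Nat.choose_symm_half M')
  rw [hsym]; ring

lemma Snum_succ_succ (q n k m : ℕ) (h : n = k + 2*m) :
    Snum q (n+1) (k+1) = Snum q n k + q * (if k+2 ≤ n then Snum q n (k+2) else 0) := by
  have hk : k ≤ n := by omega
  rw [Snum, if_pos (by omega : k+1 ≤ n+1)]
  have hd1 : (n+1-(k+1))/2 = m := by omega
  rw [hd1]
  rw [Snum, if_pos hk]
  have hd2 : (n-k)/2 = m := by omega
  rw [hd2]
  cases m with
  | zero =>
    have hnk : n = k := by omega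
    subst hnk
    rw [if_neg (by omega)]
    simp [Lnum_self]
  | succ m' =>
    rw [if_pos (by omega : k + 2 ≤ n)]
    rw [Snum, if_pos (by omega : k + 2 ≤ n)]
    have hd3 : (n-(k+2))/2 = m' := by omega
    rw [hd3]
    rw [Finset.sum_range_succ]
    nth_rewrite 2 [Finset.sum_range_succ]
    have hlast1 : k + 1 + 2 * (m'+1) = n + 1 := by omega
    have hlast2 : k + 2 * (m'+1) = n := by omega
    rw [hlast1, hlast2, Lnum_self, Lnum_self]
    have hstep : ∀ j ∈ Finset.range (m'+1),
        (q:ℤ) ^ (m'+1-j) * Lnum (n+1) (k+1+2*j)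
          = (q:ℤ) ^ (m'+1-j) * Lnum n (k+2*j) + (q:ℤ) * ((q:ℤ)^(m'-j) * Lnum n (k+2+2*j)) := by
      intro j hj
      rw [Finset.mem_range] at hj
      have hp := Lnum_pascal n (k+1+2*j) (m'+1-j) (by omega) (by omega) (by omega)
      have e1 : k+1+2*j - 1 = k + 2*j := by omega
      have e2 : k+1+2*j + 1 = k + 2 + 2*j := by omega
      rw [e1, e2] at hp
      rw [hp]
      have e3 : (q:ℤ) ^ (m'+1-j) = (q:ℤ) * (q:ℤ)^(m'-j) := by
        rw [← pow_succ']
        congr 1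
        omega
      rw [e3]
      ring
    rw [Finset.sum_congr rfl hstep, Finset.sum_add_distrib, Finset.mul_sum]
    ring

lemma Snum_succ_zero (q n M : ℕ) (hM : 1 ≤ M) (h : n + 1 = 2*M) :
    Snum q (n+1) 0 = (q+1) * Snum q n 1 := by
  have h1 : 1 ≤ n := by omega
  rw [Snum, if_pos (by omega : 0 ≤ n+1), Snum, if_pos h1]
  have hd1 : (n+1-0)/2 = M := by omega
  have hd2 : (n-1)/2 = M - 1 := by omega
  rw [hd1, hd2]
  obtain ⟨M', rfl⟩ : ∃ M', M = M' + 1 := ⟨M - 1, by omega⟩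
  have hdd : M' + 1 - 1 = M' := by omega
  rw [hdd]
  rw [Finset.sum_range_succ']
  rw [Finset.sum_range_succ]
  have hlast : 0 + 2 * (M' + 1) = n + 1 := by omega
  rw [hlast, Lnum_self]
  have e0 : (0 + 2*0 : ℕ) = 0 := by norm_num
  rw [e0]
  have hzero : Lnum (n+1) 0 = Lnum n 1 := Lnum_zero_eq n (M'+1) (by omega) h
  rw [hzero]
  have hstep : ∀ j ∈ Finset.range M',
      (q:ℤ) ^ (M'+1-(j+1)) * Lnum (n+1) (0 + 2*(j+1))
        = (q:ℤ) * ((q:ℤ) ^ (M'-(j+1)) * Lnum n (1+2*(j+1))) + (q:ℤ) ^ (M'-j) * Lnum n (1+2*j) := by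
    intro j hj
    rw [Finset.mem_range] at hj
    have hp := Lnum_pascal n (0+2*(j+1)) (M'-j) (by omega) (by omega) (by omega)
    have e1 : 0+2*(j+1) - 1 = 1 + 2*j := by omega
    have e2 : 0+2*(j+1) + 1 = 1 + 2*(j+1) := by omega
    rw [e1, e2] at hp
    rw [hp]
    have e3 : M'+1-(j+1) = M' - j := by omega
    have e4 : (q:ℤ) ^ (M'-j) = (q:ℤ) ^ (M'-(j+1)) * (q:ℤ) := by
      rw [← pow_succ]
      congr 1
      omega
    rw [e3, e4]
    ring
  rw [Finset.sum_congr rfl hstep, Finset.sum_add_distrib]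
  simp only [add_mul, one_mul]
  rw [Finset.mul_sum]
  rw [Finset.sum_range_succ']
  rw [Finset.sum_range_succ]
  have hA : Lnum n (1 + 2*M') = 1 := by
    have e : 1 + 2*M' = n := by omega
    rw [e, Lnum_self]
  rw [hA]
  simp only [Nat.sub_self, Nat.sub_zero, pow_zero, mul_one, Nat.add_sub_cancel]
  have e5 : (1 + 2*0 : ℕ) = 1 := by norm_num
  rw [e5]
  ring

/-- Walk-count value: `Snum` gated by the parity/size condition. -/
def Tnum (q n k : ℕ) : ℤ :=
  if k ≤ n ∧ (2:ℤ) ∣ ((n:ℤ) - (k:ℤ)) then Snum q n k else 0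

lemma Tnum_zero (q k : ℕ) : Tnum q 0 k = if k = 0 then 1 else 0 := by
  rcases Nat.eq_zero_or_pos k with rfl | hk
  · rw [Tnum, if_pos ⟨le_refl 0, by norm_num⟩, if_pos rfl, Snum, if_pos (le_refl 0)]
    simp [Lnum_self]
  · rw [Tnum, if_neg (by push_cast; omega), if_neg (by omega)]

lemma Tnum_succ_succ (q n k : ℕ) :
    Tnum q (n+1) (k+1) = Tnum q n k + (q:ℤ) * Tnum q n (k+2) := by
  by_cases hpar : (2:ℤ) ∣ ((n:ℤ) - (k:ℤ))
  · by_cases hk : k ≤ n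
    · obtain ⟨m, hm⟩ : ∃ m, n = k + 2*m := ⟨(n-k)/2, by omega⟩
      rw [Tnum, if_pos ⟨by omega, by push_cast; omega⟩, Tnum, if_pos ⟨hk, hpar⟩]
      rw [Snum_succ_succ q n k m hm]
      congr 1
      by_cases h2 : k + 2 ≤ n
      · rw [if_pos h2, Tnum, if_pos ⟨h2, by push_cast; omega⟩]
      · rw [if_neg h2, Tnum, if_neg (by push_cast; omega)]
    · rw [Tnum, if_neg (by push_cast; omega), Tnum, if_neg (by push_cast; omega),
          Tnum, if_neg (by push_cast; omega)]
      ring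
  · rw [Tnum, if_neg (by push_cast; omega), Tnum, if_neg (by push_cast; omega),
        Tnum, if_neg (by push_cast; omega)]
    ring

lemma Tnum_succ_zero (q n : ℕ) :
    Tnum q (n+1) 0 = ((q:ℤ)+1) * Tnum q n 1 := by
  by_cases hpar : (2:ℤ) ∣ ((n:ℤ) + 1)
  · obtain ⟨M, hM1, hM2⟩ : ∃ M, n + 1 = 2*M ∧ 1 ≤ M := ⟨(n+1)/2, by omega, by omega⟩
    rw [Tnum, if_pos ⟨by omega, by push_cast; omega⟩,
        Tnum, if_pos ⟨by omega, by push_cast; omega⟩]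
    exact Snum_succ_zero q n M hM2 hM1
  · rw [Tnum, if_neg (by push_cast; omega), Tnum, if_neg (by push_cast; omega)]
    ring


/-- The number of walks of length `n` between two vertices at distance `k` in the
`(q+1)`-regular tree equals `S_q(n,k)` when `n ≥ k` and `n - k` is even, and `0` otherwise. -/
theorem walk_count_regular_tree {V : Type*} (G : SimpleGraph V) (q : ℕ) (hq : 1 ≤ q)
    (htree : G.IsTree) (hreg : ∀ v, (G.neighborSet v).ncard = q + 1)
    (u v : V) (n : ℕ) :
    ((G.dist u v ≤ n ∧ (2 : ℤ) ∣ (n : ℤ) - (G.dist u v : ℤ)) →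
      (Nat.card {p : G.Walk u v // p.length = n} : ℤ) = Snum q n (G.dist u v)) ∧
    (¬(G.dist u v ≤ n ∧ (2 : ℤ) ∣ (n : ℤ) - (G.dist u v : ℤ)) →
      Nat.card {p : G.Walk u v // p.length = n} = 0) := by
  classical
  have hconn := htree.isConnected
  haveI hlf : G.LocallyFinite := fun x =>
    (Set.finite_of_ncard_ne_zero (by rw [hreg]; omega)).fintype
  -- every path realizes the distance
  have plen : ∀ {a b : V} (p : G.Walk a b), p.IsPath → p.length = G.dist a b := by
    intro a b p hp
    obtain ⟨w, hw⟩ := hconn.exists_walk_length_eq_dist a b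
    have hb : w.bypass.IsPath := w.bypass_isPath
    have hpb : p = w.bypass := (htree.existsUnique_path a b).unique hp hb
    have h1 : G.dist a b ≤ p.length := SimpleGraph.dist_le p
    have h2 : p.length ≤ G.dist a b := by
      rw [hpb, ← hw]; exact w.length_bypass_le
    omega
  have getP : ∀ (a b : V), ∃ p : G.Walk a b, p.IsPath ∧ p.length = G.dist a b := by
    intro a b
    obtain ⟨w, _⟩ := hconn.exists_walk_length_eq_dist a b
    exact ⟨w.bypass, w.bypass_isPath, plen _ w.bypass_isPath⟩
  -- classification of neighbour distances
  have distlemma : ∀ (a b : V) (k : ℕ), G.dist a b = k + 1 →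
      ∃ w0 : V, G.Adj a w0 ∧ G.dist w0 b = k ∧
        ∀ w, G.Adj a w → w ≠ w0 → G.dist w b = k + 2 := by
    intro a b k hk
    obtain ⟨P, hPpath, hPlen⟩ := getP a b
    rw [hk] at hPlen
    cases P with
    | nil => simp at hPlen
    | @cons _ w0 _ hadj P' =>
      have hP' : P'.IsPath := hPpath.of_cons
      have hP'len : P'.length = G.dist w0 b := plen P' hP'
      rw [SimpleGraph.Walk.length_cons] at hPlen
      refine ⟨w0, hadj, by omega, ?_⟩
      intro w hw hne
      have hub : G.dist w b ≤ k + 2 := by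
        have ht := hconn.dist_triangle (u := w) (v := a) (w := b)
        have h1 : G.dist w a = 1 := SimpleGraph.dist_eq_one_iff_adj.mpr hw.symm
        omega
      have hlb : k ≤ G.dist w b := by
        have ht := hconn.dist_triangle (u := a) (v := w) (w := b)
        have h1 : G.dist a w = 1 := SimpleGraph.dist_eq_one_iff_adj.mpr hw
        omega
      have hne1 : G.dist w b ≠ k := by
        intro hd
        obtain ⟨Q, hQpath, hQlen⟩ := getP w b
        rw [hd] at hQlen
        by_cases hmem : a ∈ Q.support
        · have hdrop : (Q.dropUntil a hmem).IsPath := hQpath.dropUntil hmem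
          have h1 : (Q.dropUntil a hmem).length = G.dist a b := plen _ hdrop
          have h2 := Q.length_dropUntil_le hmem
          omega
        · have hcons : (SimpleGraph.Walk.cons hw Q).IsPath := hQpath.cons hmem
          have heq : SimpleGraph.Walk.cons hw Q = SimpleGraph.Walk.cons hadj P' :=
            (htree.existsUnique_path a b).unique hcons hPpath
          have hgv := congrArg (fun p => p.getVert 1) heq
          simp only [SimpleGraph.Walk.getVert_cons_succ, SimpleGraph.Walk.getVert_zero] at hgv
          exact hne hgv
      have hne2 : G.dist w b ≠ k + 1 := by
        intro hd
        obtain ⟨Q, hQpath, hQlen⟩ := getP w b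
        rw [hd] at hQlen
        by_cases hmem : a ∈ Q.support
        · have h1 : (Q.dropUntil a hmem).length = G.dist a b := plen _ (hQpath.dropUntil hmem)
          have h2 := congrArg SimpleGraph.Walk.length (Q.take_spec hmem)
          rw [SimpleGraph.Walk.length_append] at h2
          have h3 : (Q.takeUntil a hmem).length = 0 := by omega
          have h4 : w = a := SimpleGraph.Walk.eq_of_length_eq_zero h3
          exact hw.ne h4.symm
        · have hcons : (SimpleGraph.Walk.cons hw Q).IsPath := hQpath.cons hmem
          have h1 : (SimpleGraph.Walk.cons hw Q).length = G.dist a b := plen _ hcons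
          rw [SimpleGraph.Walk.length_cons, hk] at h1
          omega
      omega
  -- counting recursion
  have card_rec : ∀ (n : ℕ) (a b : V),
      (G.finsetWalkLength (n+1) a b).card
        = ∑ w ∈ (G.neighborSet a).toFinset, (G.finsetWalkLength n w b).card := by
    intro n a b
    rw [SimpleGraph.finsetWalkLength]
    rw [Finset.card_biUnion]
    · simp only [Finset.card_map]
      exact Finset.sum_set_coe (f := fun w => ((G.finsetWalkLength n w b).card : ℕ)) _
    · intro x _ y _ hxy
      rw [Function.onFun, Finset.disjoint_left]
      intro p hp hp'
      rw [Finset.mem_map] at hp hp'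
      obtain ⟨p1, _, e1⟩ := hp
      obtain ⟨p2, _, e2⟩ := hp'
      apply hxy
      have hx : G.Adj a x := x.property
      have hy : G.Adj a y := y.property
      have heq : SimpleGraph.Walk.cons hx p1 = SimpleGraph.Walk.cons hy p2 :=
        e1.trans e2.symm
      have hgv := congrArg (fun p => p.getVert 1) heq
      simp only [SimpleGraph.Walk.getVert_cons_succ, SimpleGraph.Walk.getVert_zero] at hgv
      exact Subtype.ext hgv
  have hcard : ∀ a : V, (G.neighborSet a).toFinset.card = q + 1 := by
    intro a
    rw [← Set.ncard_eq_toFinset_card']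
    exact hreg a
  -- main induction
  have main : ∀ (n : ℕ) (a b : V),
      ((G.finsetWalkLength n a b).card : ℤ) = Tnum q n (G.dist a b) := by
    intro n
    induction n with
    | zero =>
      intro a b
      rw [Tnum_zero]
      by_cases h : a = b
      · subst h
        rw [if_pos SimpleGraph.dist_self]
        simp [SimpleGraph.finsetWalkLength]
      · rw [if_neg (fun hd => h (hconn.dist_eq_zero_iff.mp hd))]
        simp [SimpleGraph.finsetWalkLength, h]
    | succ n ih =>
      intro a b
      rw [card_rec n a b, Nat.cast_sum,
        Finset.sum_congr rfl (fun w _ => ih w b)]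
      rcases Nat.eq_zero_or_pos (G.dist a b) with hd | hd
      · have hab : a = b := hconn.dist_eq_zero_iff.mp hd
        rw [hd, Tnum_succ_zero]
        have hall : ∀ w ∈ (G.neighborSet a).toFinset, Tnum q n (G.dist w b) = Tnum q n 1 := by
          intro w hw
          rw [Set.mem_toFinset, SimpleGraph.mem_neighborSet] at hw
          have h1 : G.dist w b = 1 := by
            rw [SimpleGraph.dist_comm]
            exact SimpleGraph.dist_eq_one_iff_adj.mpr (hab ▸ hw)
          rw [h1]
        rw [Finset.sum_congr rfl hall, Finset.sum_const, hcard a, nsmul_eq_mul]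
        push_cast
        ring
      · obtain ⟨k, hk⟩ : ∃ k, G.dist a b = k + 1 := ⟨G.dist a b - 1, by omega⟩
        obtain ⟨w0, hadj0, hd0, hother⟩ := distlemma a b k hk
        rw [hk, Tnum_succ_succ]
        have hw0mem : w0 ∈ (G.neighborSet a).toFinset := by
          rw [Set.mem_toFinset]; exact hadj0
        rw [← Finset.add_sum_erase _ (fun w => Tnum q n (G.dist w b)) hw0mem]
        rw [hd0]
        congr 1
        have hall : ∀ w ∈ (G.neighborSet a).toFinset.erase w0,
            Tnum q n (G.dist w b) = Tnum q n (k+2) := by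
          intro w hw
          obtain ⟨hne, hmem⟩ := Finset.mem_erase.mp hw
          rw [Set.mem_toFinset, SimpleGraph.mem_neighborSet] at hmem
          rw [hother w hmem hne]
        rw [Finset.sum_congr rfl hall, Finset.sum_const,
          Finset.card_erase_of_mem hw0mem, hcard a]
        simp only [Nat.add_sub_cancel, nsmul_eq_mul]
  have key : ((Nat.card {p : G.Walk u v // p.length = n}) : ℤ) = Tnum q n (G.dist u v) := by
    rw [← main n u v]
    congr 1
    have e : {p : G.Walk u v // p.length = n} ≃ {p : G.Walk u v // p ∈ G.finsetWalkLength n u v} :=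
      Equiv.subtypeEquivRight fun p => SimpleGraph.mem_finsetWalkLength_iff.symm
    rw [Nat.card_congr e, Nat.card_eq_finsetCard]
  constructor
  · intro hcond
    rw [key, Tnum, if_pos hcond]
  · intro hcond
    rw [Tnum, if_neg hcond] at key
    exact_mod_cast key
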